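/- Let d ≥ 2 and suppose t_1 < t_2 < ⋯ < t_d are real numbers and (α_i, β_i) ⊂ (t_i, t_{i+1}) for i = 1,...,d-1. Write Δ_i = β_i - α_i and suppose f = Σ_{i=1}^{d-1} c_i χ_{(α_i,β_i)} with c_i ≥ 0. Fix p ∈ {1,...,d-1} and suppose the exponents {e_i : i = 1,...,d-1, i ≠ p} are an enumeration of {1,2,...,d-2}. Then there is a constant c(d) > 0 depending only on d such that ∫_{t_1}^{t_d} f(u) ψ(u; t_1,...,t_d) du ≥ c(d) · c_p · Δ_p^{d-1} · ∏_{1 ≤ i ≤ d-1, i ≠ p} Δ_i^{e_i}. -/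

import Mathlib

open MeasureTheory

/-- The function ψ(u; t_1,...,t_d): for d = 2, ψ(u; t_1,t_2) = χ_{[t_1,t_2]}(u);
inductively, ψ(u; t_1,...,t_d) = ∫_{t_1}^{t_2} ⋯ ∫_{t_{d-1}}^{t_d} ψ(u; s_1,...,s_{d-1})
ds_1 ⋯ ds_{d-1}. -/
noncomputable def psi : (n : ℕ) → ℝ → (Fin n → ℝ) → ℝ
  | 0, _, _ => 0
  | 1, _, _ => 0
  | 2, u, t => Set.indicator (Set.Icc (t 0) (t 1)) (fun _ => (1 : ℝ)) u
  | n + 3, u, t =>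
      ∫ s in Set.univ.pi (fun i : Fin (n + 2) => Set.Ioo (t i.castSucc) (t i.succ)),
        psi (n + 2) u s

def box (n : ℕ) (t : Fin (n + 1) → ℝ) : Set (Fin n → ℝ) :=
  Set.univ.pi (fun i : Fin n => Set.Ioo (t i.castSucc) (t i.succ))

lemma box_measurable (n : ℕ) (t : Fin (n + 1) → ℝ) : MeasurableSet (box n t) :=
  MeasurableSet.univ_pi fun _ => measurableSet_Ioo

lemma psi_succ (n : ℕ) (u : ℝ) (t : Fin (n + 3) → ℝ) :
    psi (n + 3) u t = ∫ s in box (n + 2) t, psi (n + 2) u s := rfl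

lemma psi_nonneg : ∀ (n : ℕ) (u : ℝ) (t : Fin n → ℝ), 0 ≤ psi n u t
  | 0, _, _ => le_refl _
  | 1, _, _ => le_refl _
  | 2, u, _ => Set.indicator_nonneg (fun _ _ => zero_le_one) u
  | n + 3, u, _ =>
      setIntegral_nonneg (box_measurable _ _) fun s _ => psi_nonneg (n + 2) u s

lemma measurable_psi : ∀ n : ℕ, Measurable (fun p : ℝ × (Fin n → ℝ) => psi n p.1 p.2)
  | 0 => measurable_const
  | 1 => measurable_const
  | 2 => by
      have m0 : Measurable fun p : ℝ × (Fin 2 → ℝ) => p.2 0 := by fun_prop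
      have m1 : Measurable fun p : ℝ × (Fin 2 → ℝ) => p.2 1 := by fun_prop
      have h1 : MeasurableSet {p : ℝ × (Fin 2 → ℝ) | p.2 0 ≤ p.1 ∧ p.1 ≤ p.2 1} := by
        rw [Set.setOf_and]
        exact (measurableSet_le m0 measurable_fst).inter (measurableSet_le measurable_fst m1)
      have heq : (fun p : ℝ × (Fin 2 → ℝ) => psi 2 p.1 p.2)
          = Set.indicator {p : ℝ × (Fin 2 → ℝ) | p.2 0 ≤ p.1 ∧ p.1 ≤ p.2 1}
              (fun _ => (1:ℝ)) := by
        funext p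
        by_cases h : p.2 0 ≤ p.1 ∧ p.1 ≤ p.2 1 <;>
          simp [psi, Set.indicator_apply, Set.mem_Icc, Set.mem_setOf_eq, h]
      rw [heq]
      exact Measurable.indicator measurable_const h1
  | n + 3 => by
      have ih := measurable_psi (n + 2)
      set S : Set ((ℝ × (Fin (n + 3) → ℝ)) × (Fin (n + 2) → ℝ)) :=
        {q | q.2 ∈ box (n+2) q.1.2} with hS
      have hSm : MeasurableSet S := by
        have hSeq : S = ⋂ i : Fin (n+2),
            ({q : (ℝ × (Fin (n + 3) → ℝ)) × (Fin (n + 2) → ℝ) | q.1.2 i.castSucc < q.2 i}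
              ∩ {q | q.2 i < q.1.2 i.succ}) := by
          ext q
          simp [hS, box, Set.mem_pi, Set.mem_Ioo, forall_and]
        rw [hSeq]
        refine MeasurableSet.iInter fun i => MeasurableSet.inter ?_ ?_
        · have ma : Measurable fun q : (ℝ × (Fin (n + 3) → ℝ)) × (Fin (n + 2) → ℝ) =>
            q.1.2 i.castSucc := by fun_prop
          have mb : Measurable fun q : (ℝ × (Fin (n + 3) → ℝ)) × (Fin (n + 2) → ℝ) =>
            q.2 i := by fun_prop
          exact measurableSet_lt ma mb
        · have ma : Measurable fun q : (ℝ × (Fin (n + 3) → ℝ)) × (Fin (n + 2) → ℝ) =>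
            q.1.2 i.succ := by fun_prop
          have mb : Measurable fun q : (ℝ × (Fin (n + 3) → ℝ)) × (Fin (n + 2) → ℝ) =>
            q.2 i := by fun_prop
          exact measurableSet_lt mb ma
      have hg : Measurable (S.indicator
          (fun q : (ℝ × (Fin (n + 3) → ℝ)) × (Fin (n + 2) → ℝ) => psi (n + 2) q.1.1 q.2)) :=
        Measurable.indicator (ih.comp ((measurable_fst.fst).prodMk measurable_snd)) hSm
      have hsm := (hg.stronglyMeasurable).integral_prod_right'
        (ν := (volume : Measure (Fin (n+2) → ℝ)))
      have heq : (fun p : ℝ × (Fin (n + 3) → ℝ) => psi (n+3) p.1 p.2)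
          = fun p => ∫ s, S.indicator
              (fun q : (ℝ × (Fin (n + 3) → ℝ)) × (Fin (n + 2) → ℝ) => psi (n + 2) q.1.1 q.2)
              (p, s) := by
        funext p
        rw [psi_succ]
        have h2 : (fun s => S.indicator
            (fun q : (ℝ × (Fin (n + 3) → ℝ)) × (Fin (n + 2) → ℝ) => psi (n + 2) q.1.1 q.2)
            (p, s)) = (box (n+2) p.2).indicator (fun s => psi (n + 2) p.1 s) := by
          funext s
          by_cases h : s ∈ box (n+2) p.2
          · rw [Set.indicator_of_mem h]
            exact Set.indicator_of_mem h _
          · rw [Set.indicator_of_notMem h]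
            exact Set.indicator_of_notMem h _
        rw [h2, integral_indicator (box_measurable _ _)]
      rw [heq]
      exact hsm.measurable

lemma measurable_psi_left (n : ℕ) (u : ℝ) : Measurable (fun s : Fin n → ℝ => psi n u s) :=
  (measurable_psi n).comp (measurable_const.prodMk measurable_id)

lemma box_volume (n : ℕ) (t : Fin (n + 1) → ℝ) :
    volume (box n t) = ∏ i : Fin n, ENNReal.ofReal (t i.succ - t i.castSucc) := by
  rw [box, volume_pi_pi]
  simp [Real.volume_Ioo]

lemma box_volume_lt_top (n : ℕ) (t : Fin (n + 1) → ℝ) : volume (box n t) < ⊤ := by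
  rw [box_volume]
  exact (ENNReal.prod_ne_top fun i _ => ENNReal.ofReal_ne_top).lt_top

lemma psi_le : ∀ (n : ℕ) (u : ℝ) (t : Fin (n + 2) → ℝ) (b : ℝ), 0 ≤ b →
    (∀ i j, t i - t j ≤ b) → psi (n + 2) u t ≤ (b + 1) ^ ((n + 2) * (n + 2))
  | 0, u, t, b, hb, _ => by
      have h1 : psi 2 u t ≤ 1 := by
        by_cases h : u ∈ Set.Icc (t 0) (t 1)
        · rw [psi, Set.indicator_of_mem h]
        · rw [psi, Set.indicator_of_notMem h]; exact zero_le_one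
      exact h1.trans (one_le_pow₀ (by linarith))
  | n + 1, u, t, b, hb, hbt => by
      have hb1 : (1 : ℝ) ≤ b + 1 := by linarith
      set C : ℝ := (b + 1) ^ ((n + 2) * (n + 2)) with hC
      have hC0 : 0 ≤ C := by positivity
      have key : ∀ s ∈ box (n + 2) t, psi (n + 2) u s ≤ C := by
        intro s hs
        refine psi_le n u s b hb fun i j => ?_
        have h1 := (hs i (Set.mem_univ i)).2
        have h2 := (hs j (Set.mem_univ j)).1
        have := hbt i.succ j.castSucc
        linarith
      have hvol : (volume (box (n + 2) t)).toReal ≤ (b + 1) ^ (n + 2) := by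
        refine ENNReal.toReal_le_of_le_ofReal (by positivity) ?_
        rw [box_volume]
        calc ∏ i : Fin (n+2), ENNReal.ofReal (t i.succ - t i.castSucc)
            ≤ ∏ _i : Fin (n+2), ENNReal.ofReal (b + 1) := by
              refine Finset.prod_le_prod' fun i _ => ENNReal.ofReal_le_ofReal ?_
              have := hbt i.succ i.castSucc; linarith
          _ = ENNReal.ofReal ((b+1) ^ (n+2)) := by
              rw [Finset.prod_const, ENNReal.ofReal_pow (by linarith)]
              simp
      have hint : IntegrableOn (fun s => psi (n + 2) u s) (box (n + 2) t) := by
        refine Measure.integrableOn_of_bounded (M := C) (box_volume_lt_top _ _).ne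
          (measurable_psi_left (n+2) u).aestronglyMeasurable ?_
        filter_upwards [ae_restrict_mem (box_measurable _ _)] with s hs
        rw [Real.norm_eq_abs, abs_of_nonneg (psi_nonneg _ _ _)]
        exact key s hs
      rw [psi_succ]
      calc ∫ s in box (n + 2) t, psi (n + 2) u s
          ≤ ∫ _s in box (n + 2) t, C := by
            refine setIntegral_mono_on hint (integrableOn_const
              (box_volume_lt_top _ _).ne) (box_measurable _ _) key
        _ = (volume (box (n + 2) t)).toReal * C := by rw [setIntegral_const, smul_eq_mul]; rfl
        _ ≤ (b + 1) ^ (n + 2) * C := mul_le_mul_of_nonneg_right hvol hC0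
        _ = (b + 1) ^ ((n + 2) + (n + 2) * (n + 2)) := by rw [hC, ← pow_add]
        _ ≤ (b + 1) ^ ((n + 3) * (n + 3)) := pow_le_pow_right₀ hb1 (by nlinarith)

lemma ofReal_psi_succ (n : ℕ) (u : ℝ) (t : Fin (n + 3) → ℝ) :
    ENNReal.ofReal (psi (n + 3) u t)
      = ∫⁻ s in box (n + 2) t, ENNReal.ofReal (psi (n + 2) u s) := by
  have hmeas := measurable_psi_left (n + 2) u
  have heq : psi (n + 3) u t
      = (∫⁻ s in box (n + 2) t, ENNReal.ofReal (psi (n + 2) u s)).toReal := by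
    rw [psi_succ]
    rw [integral_eq_lintegral_of_nonneg_ae
      (Filter.Eventually.of_forall fun s => psi_nonneg _ _ _)
      hmeas.aestronglyMeasurable]
  rw [heq, ENNReal.ofReal_toReal]
  set b : ℝ := 2 * ∑ k : Fin (n + 3), |t k| with hbdef
  have hb : 0 ≤ b := by positivity
  have hbt : ∀ s ∈ box (n + 2) t, ∀ i j, s i - s j ≤ b := by
    intro s hs i j
    have h1 := (hs i (Set.mem_univ i)).2
    have h2 := (hs j (Set.mem_univ j)).1
    have e1 : t i.succ ≤ |t i.succ| := le_abs_self _
    have e2 : -t j.castSucc ≤ |t j.castSucc| := neg_le_abs _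
    have f1 : |t i.succ| ≤ ∑ k : Fin (n + 3), |t k| :=
      Finset.single_le_sum (fun k _ => abs_nonneg (t k)) (Finset.mem_univ _)
    have f2 : |t j.castSucc| ≤ ∑ k : Fin (n + 3), |t k| :=
      Finset.single_le_sum (fun k _ => abs_nonneg (t k)) (Finset.mem_univ _)
    rw [hbdef]; linarith
  have hbound : ∫⁻ s in box (n + 2) t, ENNReal.ofReal (psi (n + 2) u s)
      ≤ volume (box (n + 2) t) * ENNReal.ofReal ((b + 1) ^ ((n + 2) * (n + 2))) := by
    calc ∫⁻ s in box (n + 2) t, ENNReal.ofReal (psi (n + 2) u s)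
        ≤ ∫⁻ _s in box (n + 2) t, ENNReal.ofReal ((b + 1) ^ ((n + 2) * (n + 2))) := by
          refine setLIntegral_mono measurable_const fun s hs => ?_
          exact ENNReal.ofReal_le_ofReal (psi_le n u s b hb (hbt s hs))
      _ = volume (box (n + 2) t) * ENNReal.ofReal ((b + 1) ^ ((n + 2) * (n + 2))) := by
          rw [setLIntegral_const, mul_comm]
  exact (hbound.trans_lt (ENNReal.mul_lt_top (box_volume_lt_top _ _)
    ENNReal.ofReal_lt_top)).ne

def KeyStmt (n : ℕ) : Prop :=
  ∃ c0 : ℝ, 0 < c0 ∧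
    ∀ t : Fin (n + 1) → ℝ, StrictMono t →
    ∀ α β : Fin n → ℝ,
    (∀ i : Fin n, t i.castSucc ≤ α i ∧ α i < β i ∧ β i ≤ t i.succ) →
    ∀ c : Fin n → ℝ, (∀ i, 0 ≤ c i) →
    ∀ p : Fin n, ∀ e : Fin n → ℕ,
    (∀ i, i ≠ p → 1 ≤ e i ∧ e i ≤ n - 1) →
    (∀ i j, i ≠ p → j ≠ p → e i = e j → i = j) →
    ENNReal.ofReal
        (c0 * (c p * (β p - α p) ^ n * ∏ i ∈ Finset.univ.erase p, (β i - α i) ^ e i))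
      ≤ ∫⁻ u in Set.Ioo (t 0) (t (Fin.last n)),
          ENNReal.ofReal
            ((∑ i, c i * Set.indicator (Set.Ioo (α i) (β i)) (fun _ => (1 : ℝ)) u)
              * psi (n + 1) u t)

lemma key_base : KeyStmt 1 := by
  refine ⟨1, one_pos, ?_⟩
  intro t ht α β hαβ c hc p e he1 he2
  have hp : p = 0 := Subsingleton.elim p 0
  subst hp
  have hprod : (∏ i ∈ Finset.univ.erase (0 : Fin 1), (β i - α i) ^ e i) = 1 :=
    Finset.prod_eq_one fun i hi =>
      absurd (Subsingleton.elim i 0) (Finset.ne_of_mem_erase hi)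
  obtain ⟨h1, h2, h3⟩ := hαβ 0
  have hc0 := hc 0
  have hIoo : Set.Ioo (α 0) (β 0) ⊆ Set.Ioo (t 0) (t (Fin.last 1)) :=
    Set.Ioo_subset_Ioo h1 h3
  calc ENNReal.ofReal
        (1 * (c 0 * (β 0 - α 0) ^ 1 * ∏ i ∈ Finset.univ.erase (0 : Fin 1), (β i - α i) ^ e i))
      = ENNReal.ofReal (c 0) * ENNReal.ofReal (β 0 - α 0) := by
        rw [hprod, one_mul, mul_one, pow_one, ENNReal.ofReal_mul hc0]
    _ = ∫⁻ _u in Set.Ioo (α 0) (β 0), ENNReal.ofReal (c 0) := by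
        rw [setLIntegral_const, Real.volume_Ioo]
    _ ≤ ∫⁻ u in Set.Ioo (α 0) (β 0),
          ENNReal.ofReal
            ((∑ i, c i * Set.indicator (Set.Ioo (α i) (β i)) (fun _ => (1 : ℝ)) u)
              * psi 2 u t) := by
        refine setLIntegral_mono' measurableSet_Ioo fun u hu => ?_
        refine ENNReal.ofReal_le_ofReal ?_
        rw [Fin.sum_univ_one, Set.indicator_of_mem hu]
        have hmem : u ∈ Set.Icc (t 0) (t 1) := ⟨le_of_lt (lt_of_le_of_lt h1 hu.1),
          le_of_lt (lt_of_lt_of_le hu.2 h3)⟩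
        have hps : psi 2 u t = 1 := by
          show Set.indicator (Set.Icc (t 0) (t 1)) (fun _ => (1:ℝ)) u = 1
          rw [Set.indicator_of_mem hmem]
        rw [hps]
        ring_nf
        exact le_refl _
    _ ≤ ∫⁻ u in Set.Ioo (t 0) (t (Fin.last 1)),
          ENNReal.ofReal
            ((∑ i, c i * Set.indicator (Set.Ioo (α i) (β i)) (fun _ => (1 : ℝ)) u)
              * psi 2 u t) := lintegral_mono_set hIoo

set_option maxHeartbeats 1000000 in
lemma key_step (n : ℕ) (ihyp : KeyStmt (n + 1)) : KeyStmt (n + 2) := by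
  classical
  obtain ⟨c0, hc0, IH⟩ := ihyp
  refine ⟨c0 * (1/3 : ℝ) ^ ((n + 3) + (n + 2) * (n + 2)), by positivity, ?_⟩
  intro t ht α β hαβ c hc p e he1 he2
  have hΔpos : ∀ i, 0 < β i - α i := fun i => sub_pos.mpr (hαβ i).2.1
  set m1 : Fin (n + 2) → ℝ := fun i => α i + (β i - α i) / 3 with hm1def
  set m2 : Fin (n + 2) → ℝ := fun i => α i + 2 * ((β i - α i) / 3) with hm2def
  have hm : ∀ i, α i < m1 i ∧ m1 i < m2 i ∧ m2 i < β i ∧ m2 i - m1 i = (β i - α i) / 3 := by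
    intro i
    have := hΔpos i
    refine ⟨?_, ?_, ?_, ?_⟩ <;> simp only [hm1def, hm2def] <;> ring_nf <;> linarith
  -- the index q with e q = 1
  have hq_ex : ∃ q ∈ Finset.univ.erase p, 1 = e q := by
    have hcard : (Finset.Icc 1 (n + 1)).card ≤ (Finset.univ.erase p).card := by
      rw [Finset.card_erase_of_mem (Finset.mem_univ p), Finset.card_univ]
      simp [Nat.card_Icc]
    have hsurj := Finset.surj_on_of_inj_on_of_card_le (s := Finset.univ.erase p)
      (t := Finset.Icc 1 (n + 1)) (fun i _ => e i)
      (fun i hi => Finset.mem_Icc.mpr ⟨(he1 i (Finset.ne_of_mem_erase hi)).1,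
        le_trans (he1 i (Finset.ne_of_mem_erase hi)).2 (le_of_eq (by omega))⟩)
      (fun i j hi hj hij => he2 i j (Finset.ne_of_mem_erase hi) (Finset.ne_of_mem_erase hj) hij)
      hcard 1 (Finset.mem_Icc.mpr ⟨le_refl 1, by omega⟩)
    obtain ⟨a, ha, ha1⟩ := hsurj
    exact ⟨a, ha, ha1⟩
  obtain ⟨q, hq_mem, hq1⟩ := hq_ex
  have hqp : q ≠ p := Finset.ne_of_mem_erase hq_mem
  obtain ⟨p', hp'⟩ := Fin.exists_succAbove_eq hqp.symm
  -- new data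
  set α' : Fin (n + 1) → ℝ :=
    fun j => if j.castSucc < q then m2 j.castSucc else α j.succ with hα'def
  set β' : Fin (n + 1) → ℝ :=
    fun j => if j.castSucc < q then β j.castSucc else m1 j.succ with hβ'def
  set c' : Fin (n + 1) → ℝ := fun j => c (q.succAbove j) with hc'def
  set e' : Fin (n + 1) → ℕ := fun j => e (q.succAbove j) - 1 with he'def
  have hsub : ∀ j : Fin (n + 1), α (q.succAbove j) ≤ α' j ∧ α' j < β' j
      ∧ β' j ≤ β (q.succAbove j)
      ∧ β' j - α' j = (β (q.succAbove j) - α (q.succAbove j)) / 3 := by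
    intro j
    by_cases h : j.castSucc < q
    · rw [Fin.succAbove_of_castSucc_lt _ _ h]
      simp only [hα'def, hβ'def, if_pos h]
      have h1 := (hm j.castSucc).1
      have h2 := (hm j.castSucc).2.1
      have h3 := (hm j.castSucc).2.2.1
      have h4 := (hm j.castSucc).2.2.2
      simp only [hm1def, hm2def] at *
      refine ⟨by linarith, by linarith, le_refl _, by ring⟩
    · rw [Fin.succAbove_of_le_castSucc _ _ (not_lt.mp h)]
      simp only [hα'def, hβ'def, if_neg h]
      have h1 := (hm j.succ).1
      have h2 := (hm j.succ).2.1
      have h3 := (hm j.succ).2.2.1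
      simp only [hm1def, hm2def] at *
      refine ⟨le_refl _, by linarith, by linarith, by ring⟩
  -- exponent facts
  have hpar_ne_p : ∀ j : Fin (n + 1), j ≠ p' → q.succAbove j ≠ p := by
    intro j hj hcon
    exact hj (Fin.succAbove_right_injective (hcon.trans hp'.symm))
  have he_ge2 : ∀ j : Fin (n + 1), j ≠ p' → 2 ≤ e (q.succAbove j) := by
    intro j hj
    have h1 := (he1 _ (hpar_ne_p j hj)).1
    rcases Nat.lt_or_ge (e (q.succAbove j)) 2 with h | h
    · exfalso
      have : e (q.succAbove j) = e q := by omega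
      exact Fin.succAbove_ne q j (he2 _ _ (hpar_ne_p j hj) hqp this)
    · exact h
  have he1' : ∀ j : Fin (n + 1), j ≠ p' → 1 ≤ e' j ∧ e' j ≤ (n + 1) - 1 := by
    intro j hj
    have h2 := he_ge2 j hj
    have h3 := (he1 _ (hpar_ne_p j hj)).2
    simp only [he'def]
    omega
  have he2' : ∀ i j : Fin (n + 1), i ≠ p' → j ≠ p' → e' i = e' j → i = j := by
    intro i j hi hj hij
    simp only [he'def] at hij
    have h2i := he_ge2 i hi
    have h2j := he_ge2 j hj
    have : e (q.succAbove i) = e (q.succAbove j) := by omega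
    exact Fin.succAbove_right_injective
      (he2 _ _ (hpar_ne_p i hi) (hpar_ne_p j hj) this)
  -- the restricted box
  set B : Set (Fin (n + 2) → ℝ) := Set.univ.pi fun i => Set.Ioo (m1 i) (m2 i) with hBdef
  have hBmeas : MeasurableSet B := MeasurableSet.univ_pi fun _ => measurableSet_Ioo
  have hBbox : B ⊆ box (n + 2) t := by
    intro s hs i _
    have h1 := (hs i (Set.mem_univ i)).1
    have h2 := (hs i (Set.mem_univ i)).2
    have h3 := (hm i).1
    have h4 := (hm i).2.2.1
    have h5 := (hαβ i).1
    have h6 := (hαβ i).2.2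
    exact ⟨by linarith, by linarith⟩
  have hBvol : volume B = ∏ i : Fin (n + 2), ENNReal.ofReal ((β i - α i) / 3) := by
    rw [hBdef, volume_pi_pi]
    exact Finset.prod_congr rfl fun i _ => by rw [Real.volume_Ioo, (hm i).2.2.2]
  -- functions
  set f : ℝ → ℝ :=
    fun u => ∑ i, c i * Set.indicator (Set.Ioo (α i) (β i)) (fun _ => (1 : ℝ)) u with hfdef
  set f' : ℝ → ℝ :=
    fun u => ∑ j, c' j * Set.indicator (Set.Ioo (α' j) (β' j)) (fun _ => (1 : ℝ)) u with hf'def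
  have hfnn : ∀ u, 0 ≤ f u := fun u => Finset.sum_nonneg fun i _ =>
    mul_nonneg (hc i) (Set.indicator_nonneg (fun _ _ => zero_le_one) u)
  have hf'nn : ∀ u, 0 ≤ f' u := fun u => Finset.sum_nonneg fun j _ =>
    mul_nonneg (hc _) (Set.indicator_nonneg (fun _ _ => zero_le_one) u)
  have hf'le : ∀ u, f' u ≤ f u := by
    intro u
    have hfu : f u = c q * Set.indicator (Set.Ioo (α q) (β q)) (fun _ => (1 : ℝ)) u
        + ∑ j, c (q.succAbove j) * Set.indicator
            (Set.Ioo (α (q.succAbove j)) (β (q.succAbove j))) (fun _ => (1 : ℝ)) u :=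
      Fin.sum_univ_succAbove
        (fun i => c i * Set.indicator (Set.Ioo (α i) (β i)) (fun _ => (1 : ℝ)) u) q
    rw [hfu]
    have hterm : ∀ j : Fin (n + 1),
        c' j * Set.indicator (Set.Ioo (α' j) (β' j)) (fun _ => (1 : ℝ)) u
          ≤ c (q.succAbove j) * Set.indicator
              (Set.Ioo (α (q.succAbove j)) (β (q.succAbove j))) (fun _ => (1 : ℝ)) u := by
      intro j
      refine mul_le_mul_of_nonneg_left ?_ (hc _)
      refine Set.indicator_le_indicator_of_subset
        (Set.Ioo_subset_Ioo (hsub j).1 (hsub j).2.2.1) (fun _ => zero_le_one) u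
    calc f' u ≤ ∑ j, c (q.succAbove j) * Set.indicator
          (Set.Ioo (α (q.succAbove j)) (β (q.succAbove j))) (fun _ => (1 : ℝ)) u :=
        Finset.sum_le_sum fun j _ => hterm j
      _ ≤ _ := by
        have : 0 ≤ c q * Set.indicator (Set.Ioo (α q) (β q)) (fun _ => (1 : ℝ)) u :=
          mul_nonneg (hc q) (Set.indicator_nonneg (fun _ _ => zero_le_one) u)
        linarith
  have hfm : Measurable f := by
    apply Finset.measurable_sum
    intro i _
    exact measurable_const.mul (Measurable.indicator measurable_const measurableSet_Ioo)
  -- IH applied to each s ∈ B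
  set P' : ℝ := ∏ j ∈ Finset.univ.erase p',
      ((β (q.succAbove j) - α (q.succAbove j)) / 3) ^ (e (q.succAbove j) - 1) with hP'def
  have hIHs : ∀ s ∈ B,
      ENNReal.ofReal (c0 * (c p * ((β p - α p) / 3) ^ (n + 1) * P'))
        ≤ ∫⁻ u in Set.Ioo (s 0) (s (Fin.last (n + 1))),
            ENNReal.ofReal (f' u * psi (n + 2) u s) := by
    intro s hs
    have hsmem : ∀ i, m1 i < s i ∧ s i < m2 i := fun i =>
      ⟨(hs i (Set.mem_univ i)).1, (hs i (Set.mem_univ i)).2⟩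
    have hs_mono : StrictMono s := by
      refine Fin.strictMono_iff_lt_succ.mpr fun i => ?_
      have h1 := (hsmem i.castSucc).2
      have h2 := (hsmem i.succ).1
      have h3 := (hm i.castSucc).2.2.1
      have h4 := (hαβ i.castSucc).2.2
      have h5 := (hαβ i.succ).1
      have h6 := (hm i.succ).1
      rw [Fin.succ_castSucc] at h4
      linarith
    have hcond : ∀ j : Fin (n + 1), s j.castSucc ≤ α' j ∧ α' j < β' j ∧ β' j ≤ s j.succ := by
      intro j
      by_cases h : j.castSucc < q
      · have hα'j : α' j = m2 j.castSucc := by simp only [hα'def, if_pos h]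
        have hβ'j : β' j = β j.castSucc := by simp only [hβ'def, if_pos h]
        refine ⟨hα'j ▸ ((hsmem j.castSucc).2).le, (hsub j).2.1, ?_⟩
        rw [hβ'j]
        have h4 := (hαβ j.castSucc).2.2
        rw [Fin.succ_castSucc] at h4
        have h5 := (hαβ j.succ).1
        have h6 := (hm j.succ).1
        have h7 := (hsmem j.succ).1
        linarith
      · have hα'j : α' j = α j.succ := by simp only [hα'def, if_neg h]
        have hβ'j : β' j = m1 j.succ := by simp only [hβ'def, if_neg h]
        refine ⟨?_, (hsub j).2.1, hβ'j ▸ ((hsmem j.succ).1).le⟩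
        rw [hα'j]
        have h1 := (hsmem j.castSucc).2
        have h2 := (hm j.castSucc).2.2.1
        have h4 := (hαβ j.castSucc).2.2
        rw [Fin.succ_castSucc] at h4
        have h5 := (hαβ j.succ).1
        linarith
    have := IH s hs_mono α' β' hcond c' (fun j => hc _) p' e' he1' he2'
    -- rewrite the LHS of this
    have hLHSeq : c' p' * (β' p' - α' p') ^ (n + 1)
          * ∏ j ∈ Finset.univ.erase p', (β' j - α' j) ^ e' j
        = c p * ((β p - α p) / 3) ^ (n + 1) * P' := by
      have h1 : c' p' = c p := by rw [hc'def]; simp only; rw [hp']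
      have h2 : β' p' - α' p' = (β p - α p) / 3 := by
        have := (hsub p').2.2.2
        rw [hp'] at this
        exact this
      have h3 : ∀ j ∈ Finset.univ.erase p',
          (β' j - α' j) ^ e' j
            = ((β (q.succAbove j) - α (q.succAbove j)) / 3) ^ (e (q.succAbove j) - 1) := by
        intro j _
        rw [(hsub j).2.2.2]
      rw [h1, h2, hP'def, Finset.prod_congr rfl h3]
    rw [hLHSeq] at this
    exact this
  -- joint measurability for Tonelli
  have hjoint : AEMeasurable
      (Function.uncurry fun u (s : Fin (n + 2) → ℝ) =>
        ENNReal.ofReal (f u) * ENNReal.ofReal (psi (n + 2) u s))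
      ((volume.restrict (Set.Ioo (t 0) (t (Fin.last (n + 2))))).prod (volume.restrict B)) := by
    refine Measurable.aemeasurable ?_
    show Measurable (fun p : ℝ × (Fin (n + 2) → ℝ) =>
      ENNReal.ofReal (f p.1) * ENNReal.ofReal (psi (n + 2) p.1 p.2))
    refine Measurable.mul (f := fun p : ℝ × (Fin (n + 2) → ℝ) => ENNReal.ofReal (f p.1))
      (g := fun p : ℝ × (Fin (n + 2) → ℝ) => ENNReal.ofReal (psi (n + 2) p.1 p.2)) ?_ ?_
    · exact ((hfm.comp measurable_fst)).ennreal_ofReal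
    · exact (measurable_psi (n + 2)).ennreal_ofReal
  -- the main chain
  set U : Set ℝ := Set.Ioo (t 0) (t (Fin.last (n + 2))) with hUdef
  have main : ENNReal.ofReal (c0 * (c p * ((β p - α p) / 3) ^ (n + 1) * P')) * volume B
      ≤ ∫⁻ u in U, ENNReal.ofReal (f u * psi (n + 3) u t) := by
    calc ENNReal.ofReal (c0 * (c p * ((β p - α p) / 3) ^ (n + 1) * P')) * volume B
        = ∫⁻ _s in B, ENNReal.ofReal (c0 * (c p * ((β p - α p) / 3) ^ (n + 1) * P')) := by
          rw [setLIntegral_const]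
      _ ≤ ∫⁻ s in B, ∫⁻ u in U, ENNReal.ofReal (f u) * ENNReal.ofReal (psi (n + 2) u s) := by
          refine setLIntegral_mono' hBmeas fun s hs => ?_
          refine (hIHs s hs).trans ?_
          have hsmem : ∀ i, m1 i < s i ∧ s i < m2 i := fun i =>
            ⟨(hs i (Set.mem_univ i)).1, (hs i (Set.mem_univ i)).2⟩
          have hUsub : Set.Ioo (s 0) (s (Fin.last (n + 1))) ⊆ U := by
            rw [hUdef]
            apply Set.Ioo_subset_Ioo
            · have h1 := (hαβ 0).1
              have h2 := (hm 0).1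
              have h3 := (hsmem 0).1
              have h0 : t (Fin.castSucc 0) = t 0 := by norm_num
              linarith [h0 ▸ h1]
            · have h1 := (hαβ (Fin.last (n + 1))).2.2
              have h2 := (hm (Fin.last (n + 1))).2.2.1
              have h3 := (hsmem (Fin.last (n + 1))).2
              have h0 : t (Fin.last (n + 1)).succ = t (Fin.last (n + 2)) := by
                rw [Fin.succ_last]
              linarith [h0 ▸ h1]
          calc ∫⁻ u in Set.Ioo (s 0) (s (Fin.last (n + 1))),
                ENNReal.ofReal (f' u * psi (n + 2) u s)
              ≤ ∫⁻ u in Set.Ioo (s 0) (s (Fin.last (n + 1))),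
                  ENNReal.ofReal (f u) * ENNReal.ofReal (psi (n + 2) u s) := by
                refine setLIntegral_mono' measurableSet_Ioo fun u _ => ?_
                rw [ENNReal.ofReal_mul (hf'nn u)]
                exact mul_le_mul_left (ENNReal.ofReal_le_ofReal (hf'le u)) _
            _ ≤ ∫⁻ u in U, ENNReal.ofReal (f u) * ENNReal.ofReal (psi (n + 2) u s) :=
                lintegral_mono_set hUsub
      _ = ∫⁻ u in U, ∫⁻ s in B, ENNReal.ofReal (f u) * ENNReal.ofReal (psi (n + 2) u s) :=
          (lintegral_lintegral_swap hjoint).symm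
      _ = ∫⁻ u in U, ENNReal.ofReal (f u) * ∫⁻ s in B, ENNReal.ofReal (psi (n + 2) u s) :=
          lintegral_congr fun u => lintegral_const_mul' _ _ ENNReal.ofReal_ne_top
      _ ≤ ∫⁻ u in U, ENNReal.ofReal (f u) * ∫⁻ s in box (n + 2) t,
            ENNReal.ofReal (psi (n + 2) u s) :=
          lintegral_mono fun u => mul_le_mul_right (lintegral_mono_set hBbox) _
      _ = ∫⁻ u in U, ENNReal.ofReal (f u * psi (n + 3) u t) :=
          lintegral_congr fun u => by
            rw [ENNReal.ofReal_mul (hfnn u), ofReal_psi_succ]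
  -- final real-number bookkeeping
  refine le_trans ?_ main
  have hP'nn : 0 ≤ P' := Finset.prod_nonneg fun j _ => pow_nonneg
    (le_of_lt (div_pos (hΔpos _) (by norm_num))) _
  have hXIHnn : 0 ≤ c0 * (c p * ((β p - α p) / 3) ^ (n + 1) * P') :=
    mul_nonneg hc0.le (mul_nonneg (mul_nonneg (hc p) (pow_nonneg
      (le_of_lt (div_pos (hΔpos p) (by norm_num))) _)) hP'nn)
  rw [hBvol, ← ENNReal.ofReal_prod_of_nonneg
    (fun i _ => le_of_lt (div_pos (hΔpos i) (by norm_num))),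
    ← ENNReal.ofReal_mul hXIHnn]
  refine ENNReal.ofReal_le_ofReal ?_
  -- pure real inequality
  set E2 : Finset (Fin (n + 2)) := (Finset.univ.erase p).erase q with hE2def
  have hsplit1 : ∏ i ∈ Finset.univ.erase p, (β i - α i) ^ e i
      = (β q - α q) ^ e q * ∏ i ∈ E2, (β i - α i) ^ e i :=
    (Finset.mul_prod_erase _ _ hq_mem).symm
  have hsplit2 : ∏ i : Fin (n + 2), ((β i - α i) / 3)
      = ((β p - α p) / 3) * (((β q - α q) / 3) * ∏ i ∈ E2, ((β i - α i) / 3)) := by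
    rw [← Finset.mul_prod_erase _ _ (Finset.mem_univ p),
      ← Finset.mul_prod_erase _ _ hq_mem]
  have hP'eq : P' * ∏ i ∈ E2, ((β i - α i) / 3)
      = (∏ i ∈ E2, (β i - α i) ^ e i) * (1/3 : ℝ) ^ (∑ i ∈ E2, e i) := by
    have hre : P' = ∏ i ∈ E2, ((β i - α i) / 3) ^ (e i - 1) := by
      rw [hP'def]
      refine Finset.prod_bij (fun j _ => q.succAbove j) ?_ ?_ ?_ ?_
      · intro j hj
        rw [hE2def]
        refine Finset.mem_erase.mpr ⟨Fin.succAbove_ne q j, Finset.mem_erase.mpr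
          ⟨hpar_ne_p j (Finset.ne_of_mem_erase hj), Finset.mem_univ _⟩⟩
      · intro j1 h1 j2 h2 hj
        exact Fin.succAbove_right_injective hj
      · intro i hi
        rw [hE2def] at hi
        have hiq : i ≠ q := Finset.ne_of_mem_erase hi
        have hip : i ≠ p := Finset.ne_of_mem_erase (Finset.mem_of_mem_erase hi)
        obtain ⟨j, hj⟩ := Fin.exists_succAbove_eq hiq
        refine ⟨j, Finset.mem_erase.mpr ⟨?_, Finset.mem_univ _⟩, hj⟩
        intro hcon
        exact hip (by rw [← hj, hcon, hp'])
      · intro j _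
        rfl
    rw [hre, ← Finset.prod_mul_distrib, ← Finset.prod_pow_eq_pow_sum,
      ← Finset.prod_mul_distrib]
    refine Finset.prod_congr rfl fun i hi => ?_
    have hip : i ≠ p := Finset.ne_of_mem_erase (Finset.mem_of_mem_erase (hE2def ▸ hi))
    have h1 : 1 ≤ e i := (he1 i hip).1
    rw [div_eq_mul_one_div (β i - α i) 3, mul_pow]
    have hexp : e i - 1 + 1 = e i := by omega
    calc (β i - α i) ^ (e i - 1) * (1/3 : ℝ) ^ (e i - 1) * ((β i - α i) * (1/3))
        = ((β i - α i) ^ (e i - 1) * (β i - α i)) * ((1/3 : ℝ) ^ (e i - 1) * (1/3)) := by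
          ring
      _ = (β i - α i) ^ e i * (1/3 : ℝ) ^ e i := by
          rw [← pow_succ, ← pow_succ, hexp]
  have hsum_le : ∑ i ∈ E2, e i ≤ (n + 2) * (n + 2) := by
    have hb : ∀ i ∈ E2, e i ≤ n + 1 := by
      intro i hi
      have hip : i ≠ p := Finset.ne_of_mem_erase (Finset.mem_of_mem_erase (hE2def ▸ hi))
      have := (he1 i hip).2
      omega
    have := Finset.sum_le_card_nsmul E2 e (n + 1) hb
    rw [smul_eq_mul] at this
    have hcard : E2.card ≤ n + 2 := by
      rw [hE2def]
      calc ((Finset.univ.erase p).erase q).card ≤ (Finset.univ.erase p).card :=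
          Finset.card_le_card (Finset.erase_subset _ _)
        _ ≤ Finset.univ.card := Finset.card_le_card (Finset.erase_subset _ _)
        _ = n + 2 := by simp
    nlinarith
  have hpow : ((1:ℝ)/3) ^ ((n + 3) + (n + 2) * (n + 2))
      ≤ (1/3 : ℝ) ^ ((n + 2) + 1 + ∑ i ∈ E2, e i) :=
    pow_le_pow_of_le_one (by norm_num) (by norm_num) (by omega)
  have hA : 0 ≤ c0 * c p * (β p - α p) ^ (n + 2) * (β q - α q)
      * ∏ i ∈ E2, (β i - α i) ^ e i := by
    have h1 : (0:ℝ) ≤ ∏ i ∈ E2, (β i - α i) ^ e i :=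
      Finset.prod_nonneg fun i _ => pow_nonneg (le_of_lt (hΔpos i)) _
    have h2 := hΔpos p
    have h3 := hΔpos q
    have h4 := hc p
    exact mul_nonneg (mul_nonneg (mul_nonneg (mul_nonneg hc0.le h4)
      (pow_nonneg h2.le _)) h3.le) h1
  calc c0 * (1/3 : ℝ) ^ ((n + 3) + (n + 2) * (n + 2))
        * (c p * (β p - α p) ^ (n + 2) * ∏ i ∈ Finset.univ.erase p, (β i - α i) ^ e i)
      = (c0 * c p * (β p - α p) ^ (n + 2) * (β q - α q) * ∏ i ∈ E2, (β i - α i) ^ e i)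
          * (1/3 : ℝ) ^ ((n + 3) + (n + 2) * (n + 2)) := by
        rw [hsplit1, ← hq1, pow_one]
        ring
    _ ≤ (c0 * c p * (β p - α p) ^ (n + 2) * (β q - α q) * ∏ i ∈ E2, (β i - α i) ^ e i)
          * (1/3 : ℝ) ^ ((n + 2) + 1 + ∑ i ∈ E2, e i) :=
        mul_le_mul_of_nonneg_left hpow hA
    _ = c0 * (c p * ((β p - α p) / 3) ^ (n + 1) * P')
          * ∏ i : Fin (n + 2), ((β i - α i) / 3) := by
        rw [hsplit2]
        have hxpow : ((β p - α p) / 3) ^ (n + 1) * ((β p - α p) / 3)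
            = (β p - α p) ^ (n + 2) * (1/3 : ℝ) ^ (n + 2) := by
          rw [← pow_succ, div_eq_mul_one_div (β p - α p) 3, mul_pow]
        have hstep : c0 * (c p * ((β p - α p) / 3) ^ (n + 1) * P')
              * (((β p - α p) / 3) * (((β q - α q) / 3) * ∏ i ∈ E2, ((β i - α i) / 3)))
            = c0 * c p * ((β p - α p) ^ (n + 2) * (1/3 : ℝ) ^ (n + 2)) * ((β q - α q) / 3)
              * ((∏ i ∈ E2, (β i - α i) ^ e i) * (1/3 : ℝ) ^ (∑ i ∈ E2, e i)) := by
          calc c0 * (c p * ((β p - α p) / 3) ^ (n + 1) * P')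
                * (((β p - α p) / 3) * (((β q - α q) / 3) * ∏ i ∈ E2, ((β i - α i) / 3)))
              = c0 * c p * (((β p - α p) / 3) ^ (n + 1) * ((β p - α p) / 3))
                  * ((β q - α q) / 3) * (P' * ∏ i ∈ E2, ((β i - α i) / 3)) := by ring
            _ = _ := by rw [hxpow, hP'eq]
        rw [hstep]
        rw [pow_add, pow_add]
        ring
  -- end

lemma key : ∀ n : ℕ, KeyStmt (n + 1) := by
  intro n
  induction n with
  | zero => exact key_base
  | succ m ih => exact key_step m ih

/-- Lemma 1 of the paper.  If t_1 < ⋯ < t_d, (α_i,β_i) ⊂ (t_i,t_{i+1}),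
f = Σ c_i χ_{(α_i,β_i)} with c_i ≥ 0, p ∈ {1,...,d-1}, and {e_i : i ≠ p}
enumerates {1,...,d-2}, then
∫_{t_1}^{t_d} f(u) ψ(u;t_1,...,t_d) du ≥ c(d) · c_p Δ_p^{d-1} ∏_{i ≠ p} Δ_i^{e_i}. -/
theorem stmt_3 (d : ℕ) (hd : 2 ≤ d) :
    ∃ c0 : ℝ, 0 < c0 ∧
      ∀ t : Fin d → ℝ, StrictMono t →
      ∀ α β : Fin (d - 1) → ℝ,
      (∀ i : Fin (d - 1),
        t ⟨(i : ℕ), by have := i.isLt; omega⟩ ≤ α i ∧ α i < β i ∧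
          β i ≤ t ⟨(i : ℕ) + 1, by have := i.isLt; omega⟩) →
      ∀ c : Fin (d - 1) → ℝ, (∀ i, 0 ≤ c i) →
      ∀ p : Fin (d - 1), ∀ e : Fin (d - 1) → ℕ,
      (∀ i, i ≠ p → 1 ≤ e i ∧ e i ≤ d - 2) →
      (∀ i j, i ≠ p → j ≠ p → e i = e j → i = j) →
      c0 * (c p * (β p - α p) ^ (d - 1) *
          ∏ i ∈ Finset.univ.erase p, (β i - α i) ^ e i)
        ≤ ∫ u in Set.Ioo (t ⟨0, by omega⟩) (t ⟨d - 1, by omega⟩),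
            (∑ i, c i * Set.indicator (Set.Ioo (α i) (β i)) (fun _ => (1 : ℝ)) u) *
              psi d u t := by
  obtain ⟨n, rfl⟩ : ∃ n, d = n + 2 := ⟨d - 2, by omega⟩
  obtain ⟨c0, hc0, hkey⟩ := key n
  refine ⟨c0, hc0, ?_⟩
  intro t ht α β hαβ c hc p e he1 he2
  have hαβ' : ∀ i : Fin (n + 1), t i.castSucc ≤ α i ∧ α i < β i ∧ β i ≤ t i.succ :=
    fun i => hαβ i
  have hL := hkey t ht α β hαβ' c hc p e he1 he2
  set f : ℝ → ℝ :=
    fun u => ∑ i, c i * Set.indicator (Set.Ioo (α i) (β i)) (fun _ => (1 : ℝ)) u with hfdef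
  have hfnn : ∀ u, 0 ≤ f u := fun u => Finset.sum_nonneg fun i _ =>
    mul_nonneg (hc i) (Set.indicator_nonneg (fun _ _ => zero_le_one) u)
  have hfm : Measurable f := by
    apply Finset.measurable_sum
    intro i _
    exact measurable_const.mul (Measurable.indicator measurable_const measurableSet_Ioo)
  have hU0 : (⟨0, by omega⟩ : Fin (n + 2)) = 0 := rfl
  have hUl : (⟨n + 2 - 1, by omega⟩ : Fin (n + 2)) = Fin.last (n + 1) := rfl
  set U : Set ℝ := Set.Ioo (t 0) (t (Fin.last (n + 1))) with hUdef
  have heqI : ∫ u in U, f u * psi (n + 2) u t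
      = (∫⁻ u in U, ENNReal.ofReal (f u * psi (n + 2) u t)).toReal := by
    refine integral_eq_lintegral_of_nonneg_ae
      (Filter.Eventually.of_forall fun u => mul_nonneg (hfnn u) (psi_nonneg _ _ _)) ?_
    exact (hfm.mul ((measurable_psi (n + 2)).comp
      (measurable_id.prodMk measurable_const))).aestronglyMeasurable
  -- finiteness
  set b : ℝ := 2 * ∑ k : Fin (n + 2), |t k| with hbdef
  have hb : 0 ≤ b := by positivity
  have hbt : ∀ i j, t i - t j ≤ b := by
    intro i j
    have e1 : t i ≤ |t i| := le_abs_self _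
    have e2 : -t j ≤ |t j| := neg_le_abs _
    have f1 : |t i| ≤ ∑ k : Fin (n + 2), |t k| :=
      Finset.single_le_sum (fun k _ => abs_nonneg (t k)) (Finset.mem_univ _)
    have f2 : |t j| ≤ ∑ k : Fin (n + 2), |t k| :=
      Finset.single_le_sum (fun k _ => abs_nonneg (t k)) (Finset.mem_univ _)
    rw [hbdef]; linarith
  have hfb : ∀ u, f u ≤ ∑ i : Fin (n + 1), c i := by
    intro u
    refine Finset.sum_le_sum fun i _ => ?_
    calc c i * Set.indicator (Set.Ioo (α i) (β i)) (fun _ => (1 : ℝ)) u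
        ≤ c i * 1 := by
          refine mul_le_mul_of_nonneg_left ?_ (hc i)
          by_cases h : u ∈ Set.Ioo (α i) (β i)
          · rw [Set.indicator_of_mem h]
          · rw [Set.indicator_of_notMem h]; exact zero_le_one
      _ = c i := mul_one _
  have hfin : (∫⁻ u in U, ENNReal.ofReal (f u * psi (n + 2) u t)) < ⊤ := by
    have hCnn : 0 ≤ ∑ i : Fin (n + 1), c i := Finset.sum_nonneg fun i _ => hc i
    have hbound : ∀ u, f u * psi (n + 2) u t
        ≤ (∑ i : Fin (n + 1), c i) * (b + 1) ^ ((n + 2) * (n + 2)) := by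
      intro u
      have h1 := psi_le n u t b hb hbt
      have h2 := psi_nonneg (n + 2) u t
      have h3 := hfnn u
      have h4 := hfb u
      nlinarith
    calc ∫⁻ u in U, ENNReal.ofReal (f u * psi (n + 2) u t)
        ≤ ∫⁻ _u in U, ENNReal.ofReal
            ((∑ i : Fin (n + 1), c i) * (b + 1) ^ ((n + 2) * (n + 2))) := by
          exact setLIntegral_mono measurable_const fun u _ =>
            ENNReal.ofReal_le_ofReal (hbound u)
      _ = volume U * ENNReal.ofReal
            ((∑ i : Fin (n + 1), c i) * (b + 1) ^ ((n + 2) * (n + 2))) := by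
          rw [setLIntegral_const, mul_comm]
      _ < ⊤ := by
          refine ENNReal.mul_lt_top ?_ ENNReal.ofReal_lt_top
          rw [hUdef, Real.volume_Ioo]
          exact ENNReal.ofReal_lt_top
  have hXnn : 0 ≤ c0 * (c p * (β p - α p) ^ (n + 1)
      * ∏ i ∈ Finset.univ.erase p, (β i - α i) ^ e i) := by
    have h1 : (0:ℝ) ≤ ∏ i ∈ Finset.univ.erase p, (β i - α i) ^ e i :=
      Finset.prod_nonneg fun i _ => pow_nonneg (by linarith [(hαβ' i).2.1]) _
    have h2 : (0:ℝ) ≤ (β p - α p) ^ (n + 1) :=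
      pow_nonneg (by linarith [(hαβ' p).2.1]) _
    have h4 := hc p
    positivity
  calc c0 * (c p * (β p - α p) ^ (n + 1)
        * ∏ i ∈ Finset.univ.erase p, (β i - α i) ^ e i)
      = (ENNReal.ofReal (c0 * (c p * (β p - α p) ^ (n + 1)
          * ∏ i ∈ Finset.univ.erase p, (β i - α i) ^ e i))).toReal := by
        rw [ENNReal.toReal_ofReal hXnn]
    _ ≤ (∫⁻ u in U, ENNReal.ofReal (f u * psi (n + 2) u t)).toReal :=
        ENNReal.toReal_mono hfin.ne hL
    _ = ∫ u in U, f u * psi (n + 2) u t := heqI.symm
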